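/- Let $A$ be an $n \times m$ integer matrix and $b$ a rational $n$-tuple with all entries $a_{i,j}, b_i$ in $[-k,k]$ for a positive integer $k$. If the system $Ax \le b$ has a real solution, then it has a rational solution $x$ with every coordinate $x_i \in [-(mk)^m, (mk)^m]$. -/

import Mathlib

open Finset Matrix

lemma fact_pow_le (m k r : ℕ) (hm : 0 < m) (hk : 0 < k) (hr : r ≤ m) :
    r.factorial * k ^ r ≤ (m * k) ^ m :=
  calc r.factorial * k ^ r ≤ r ^ r * k ^ r :=
        Nat.mul_le_mul_right _ (Nat.factorial_le_pow r)
    _ ≤ m ^ r * k ^ r := Nat.mul_le_mul_right _ (Nat.pow_le_pow_left hr r)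
    _ = (m * k) ^ r := (Nat.mul_pow m k r).symm
    _ ≤ (m * k) ^ m := Nat.pow_le_pow_right (Nat.mul_pos hm hk) hr

lemma indep_case (m k : ℕ) (hm : 0 < m) (hk : 0 < k) {ι : Type} [Fintype ι]
    (C : Matrix ι (Fin m) ℤ) (d : ι → ℚ)
    (hC : ∀ i j, |C i j| ≤ (k : ℤ)) (hd : ∀ i, |d i| ≤ (k : ℚ))
    (J : Finset (Fin m))
    (hind : ¬ ∃ c : Fin m → ℚ, c ≠ 0 ∧ (∀ j ∉ J, c j = 0) ∧
        ∀ i, ∑ j, (C i j : ℚ) * c j = 0)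
    (x : Fin m → ℝ) (hx0 : ∀ j ∉ J, x j = 0)
    (hx : ∀ i, ∑ j, (C i j : ℝ) * x j = (d i : ℝ)) :
    ∃ y : Fin m → ℚ, (∀ i, ∑ j, (C i j : ℚ) * y j = d i) ∧
      ∀ j, |y j| ≤ ((m * k : ℕ) : ℚ) ^ m := by
  classical
  set row : ι → ({j // j ∈ J} → ℚ) := fun i a => (C i a.1 : ℚ) with hrow
  -- sums over subtype
  have hsum : ∀ (i : ι) (g : Fin m → ℚ), (∀ j ∉ J, g j = 0) →
      ∑ a : {j // j ∈ J}, (C i a.1 : ℚ) * g a.1 = ∑ j, (C i j : ℚ) * g j := by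
    intro i g hg
    rw [Finset.sum_coe_sort J (fun j => (C i j : ℚ) * g j)]
    apply Finset.sum_subset (Finset.subset_univ J)
    intro j _ hj
    rw [hg j hj, mul_zero]
  have hspan : Submodule.span ℚ (Set.range row) = ⊤ := by
    by_contra h
    obtain ⟨f, hf0, hfmap⟩ := Submodule.exists_dual_map_eq_bot_of_lt_top
      (lt_top_iff_ne_top.2 h) inferInstance
    have hfv : ∀ v : {j // j ∈ J} → ℚ,
        f v = ∑ a : {j // j ∈ J}, v a * f (fun b => if a = b then 1 else 0) := by
      intro v
      simpa [smul_eq_mul] using LinearMap.pi_apply_eq_sum_univ f v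
    set c : Fin m → ℚ := fun j =>
      if h : j ∈ J then f (fun b => if (⟨j, h⟩ : {j // j ∈ J}) = b then 1 else 0) else 0 with hc
    have hcJ : ∀ j ∉ J, c j = 0 := fun j hj => by simp [hc, hj]
    have hcrow : ∀ i, ∑ j, (C i j : ℚ) * c j = 0 := by
      intro i
      rw [← hsum i c hcJ]
      have : f (row i) = 0 := by
        have : f (row i) ∈ Submodule.map f (Submodule.span ℚ (Set.range row)) :=
          Submodule.mem_map_of_mem (Submodule.subset_span (Set.mem_range_self i))
        rw [hfmap] at this
        exact (Submodule.mem_bot ℚ).1 this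
      rw [← this, hfv (row i)]
      apply Finset.sum_congr rfl
      intro a _
      simp [hrow, hc, a.2]
    have hcne : c ≠ 0 := by
      intro h0
      apply hf0
      apply LinearMap.ext
      intro v
      rw [hfv v]
      apply Finset.sum_eq_zero
      intro a _
      have h2 : (f fun b => if a = b then 1 else 0) = 0 := by
        have h3 : c a.1 = 0 := by rw [h0]; rfl
        simpa only [hc, dif_pos a.2, Subtype.eta] using h3
      rw [h2, mul_zero]
    exact hind ⟨c, hcne, hcJ, hcrow⟩
  obtain ⟨s, hs_sub, hs_span, hs_ind⟩ := exists_linearIndependent ℚ (Set.range row)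
  rw [hspan] at hs_span
  have hsfin : s.Finite := hs_ind.setFinite
  haveI : Fintype s := hsfin.fintype
  have hcards : Fintype.card s = J.card := by
    have hb := Module.finrank_eq_card_basis
      (Module.Basis.mk hs_ind (by rw [Subtype.range_coe, hs_span]))
    rw [Module.finrank_pi ℚ, Fintype.card_coe] at hb
    exact hb.symm
  have e : {j // j ∈ J} ≃ s := Fintype.equivOfCardEq ((Fintype.card_coe J).trans hcards.symm)
  set idx : {j // j ∈ J} → ι := fun a => (hs_sub (e a).2).choose with hidxdef
  have hidx : ∀ a, row (idx a) = ((e a : s) : {j // j ∈ J} → ℚ) :=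
    fun a => (hs_sub (e a).2).choose_spec
  set B : Matrix {j // j ∈ J} {j // j ∈ J} ℚ := fun a => row (idx a) with hBdef
  have hBunit : IsUnit B := by
    rw [← Matrix.linearIndependent_rows_iff_isUnit]
    have hB2 : (fun a => B a) = (fun a => ((e a : s) : {j // j ∈ J} → ℚ)) := funext hidx
    change LinearIndependent ℚ (fun a => B a)
    rw [hB2]
    exact hs_ind.comp e e.injective
  have hdetB : B.det ≠ 0 := ((Matrix.isUnit_iff_isUnit_det B).1 hBunit).ne_zero
  set Bz : Matrix {j // j ∈ J} {j // j ∈ J} ℤ := fun a b => C (idx a) b.1 with hBzdef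
  have hdet_cast : B.det = ((Bz.det : ℤ) : ℚ) := by
    have h : ((Bz.det : ℤ) : ℚ) = (Bz.map (Int.cast : ℤ → ℚ)).det :=
      (Int.castRingHom ℚ).map_det Bz
    rw [h]
    rfl
  have hdet1 : (1 : ℚ) ≤ |B.det| := by
    have hBz0 : Bz.det ≠ 0 := by
      intro h
      apply hdetB
      rw [hdet_cast, h, Int.cast_zero]
    rw [hdet_cast, ← Int.cast_abs]
    exact_mod_cast Int.one_le_abs hBz0
  set dR : {j // j ∈ J} → ℚ := fun a => d (idx a) with hdRdef
  set yJ : {j // j ∈ J} → ℚ := B.det⁻¹ • Matrix.cramer B dR with hyJdef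
  have hByJ : B *ᵥ yJ = dR := by
    rw [hyJdef, Matrix.mulVec_smul, Matrix.mulVec_cramer, smul_smul,
      inv_mul_cancel₀ hdetB, one_smul]
  set y : Fin m → ℚ := fun j => if h : j ∈ J then yJ ⟨j, h⟩ else 0 with hydef
  have hy0 : ∀ j ∉ J, y j = 0 := fun j hj => by simp [hydef, hj]
  -- real side
  set Bℝ : Matrix {j // j ∈ J} {j // j ∈ J} ℝ := B.map ((↑) : ℚ → ℝ) with hBrdef
  have hdetr : Bℝ.det = (B.det : ℝ) := ((Rat.castHom ℝ).map_det B).symm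
  have hBrunit : IsUnit Bℝ := by
    rw [Matrix.isUnit_iff_isUnit_det, hdetr, isUnit_iff_ne_zero]
    exact_mod_cast hdetB
  have hinj := Matrix.mulVec_injective_iff_isUnit.2 hBrunit
  have hsumr : ∀ (i : ι) (g : Fin m → ℝ), (∀ j ∉ J, g j = 0) →
      ∑ a : {j // j ∈ J}, (C i a.1 : ℝ) * g a.1 = ∑ j, (C i j : ℝ) * g j := by
    intro i g hg
    rw [Finset.sum_coe_sort J (fun j => (C i j : ℝ) * g j)]
    apply Finset.sum_subset (Finset.subset_univ J)
    intro j _ hj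
    rw [hg j hj, mul_zero]
  have hx_eq : (fun a : {j // j ∈ J} => x a.1) = (fun a => (yJ a : ℝ)) := by
    apply hinj
    have h1 : Bℝ *ᵥ (fun a => x a.1) = fun a => (dR a : ℝ) := by
      funext a
      simp only [Matrix.mulVec, dotProduct, hBrdef, Matrix.map_apply, hBdef, hrow]
      show ∑ b : {j // j ∈ J}, ((((C (idx a) b.1 : ℤ) : ℚ) : ℝ) * x b.1) = (dR a : ℝ)
      rw [show (fun b : {j // j ∈ J} => ((((C (idx a) b.1 : ℤ) : ℚ) : ℝ) * x b.1)) =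
        (fun b : {j // j ∈ J} => ((C (idx a) b.1 : ℝ) * x b.1)) by push_cast; rfl]
      rw [hsumr (idx a) x hx0]
      exact hx (idx a)
    have h2 : Bℝ *ᵥ (fun a => (yJ a : ℝ)) = fun a => (dR a : ℝ) := by
      funext a
      have h3 := congrFun hByJ a
      simp only [Matrix.mulVec, dotProduct] at h3 ⊢
      rw [hBrdef]
      push_cast [Matrix.map_apply]
      exact_mod_cast congrArg (fun q : ℚ => (q : ℝ)) h3
    rw [h1, h2]
  have hxy : ∀ j, x j = (y j : ℝ) := by
    intro j
    by_cases hj : j ∈ J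
    · have := congrFun hx_eq ⟨j, hj⟩
      simpa [hydef, dif_pos hj] using this
    · rw [hx0 j hj, hy0 j hj, Rat.cast_zero]
  refine ⟨y, ?_, ?_⟩
  · intro i
    have hr : ((∑ j, (C i j : ℚ) * y j : ℚ) : ℝ) = ((d i : ℚ) : ℝ) := by
      push_cast
      simp only [← hxy]
      exact hx i
    exact_mod_cast hr
  · intro j
    by_cases hj : j ∈ J
    · have hyj : y j = yJ ⟨j, hj⟩ := dif_pos hj
      have hcram : |Matrix.cramer B dR ⟨j, hj⟩| ≤
          (Fintype.card {j // j ∈ J}).factorial • ((k : ℚ)) ^ (Fintype.card {j // j ∈ J}) := by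
        rw [Matrix.cramer_apply]
        apply Matrix.det_le (abv := (AbsoluteValue.abs : AbsoluteValue ℚ ℚ))
        intro i' j'
        rw [Matrix.updateCol_apply]
        by_cases h' : j' = ⟨j, hj⟩
        · rw [if_pos h']
          exact hd (idx i')
        · rw [if_neg h']
          show |((C (idx i') j'.1 : ℤ) : ℚ)| ≤ (k : ℚ)
          rw [← Int.cast_abs]
          exact_mod_cast hC (idx i') j'.1
      have hcard : Fintype.card {j // j ∈ J} = J.card := Fintype.card_coe J
      have hJm : J.card ≤ m := by
        have := Finset.card_le_univ J
        simpa using this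
      have h5 : |y j| ≤ (J.card.factorial * k ^ J.card : ℕ) := by
        rw [hyj, hyJdef]
        simp only [Pi.smul_apply, smul_eq_mul, abs_mul, abs_inv]
        calc |B.det|⁻¹ * |Matrix.cramer B dR ⟨j, hj⟩|
            ≤ 1 * ((Fintype.card {j // j ∈ J}).factorial • ((k : ℚ)) ^ (Fintype.card {j // j ∈ J})) := by
              apply mul_le_mul _ hcram (abs_nonneg _) zero_le_one
              exact inv_le_one_of_one_le₀ hdet1
          _ = _ := by
              rw [one_mul, nsmul_eq_mul, hcard]
              push_cast
              ring
      refine h5.trans ?_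
      exact_mod_cast fact_pow_le m k J.card hm hk hJm
    · rw [hy0 j hj, abs_zero]
      positivity

lemma key_lemma (m k : ℕ) (hm : 0 < m) (hk : 0 < k) {ι : Type} [Fintype ι]
    (C : Matrix ι (Fin m) ℤ) (d : ι → ℚ)
    (hC : ∀ i j, |C i j| ≤ (k : ℤ)) (hd : ∀ i, |d i| ≤ (k : ℚ)) :
    ∀ (N : ℕ) (J : Finset (Fin m)), J.card ≤ N →
      ∀ x : Fin m → ℝ, (∀ j ∉ J, x j = 0) →
      (∀ i, ∑ j, (C i j : ℝ) * x j = (d i : ℝ)) →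
      ∃ y : Fin m → ℚ, (∀ i, ∑ j, (C i j : ℚ) * y j = d i) ∧
        ∀ j, |y j| ≤ ((m * k : ℕ) : ℚ) ^ m := by
  intro N
  induction N with
  | zero =>
    intro J hJ x hx0 hx
    have hJe : J = ∅ := Finset.card_eq_zero.1 (Nat.le_zero.1 hJ)
    apply indep_case m k hm hk C d hC hd J _ x hx0 hx
    rintro ⟨c, hc0, hcJ, -⟩
    apply hc0
    funext j
    exact hcJ j (by simp [hJe])
  | succ N ih =>
    intro J hJ x hx0 hx
    by_cases hdep : ∃ c : Fin m → ℚ, c ≠ 0 ∧ (∀ j ∉ J, c j = 0) ∧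
        ∀ i, ∑ j, (C i j : ℚ) * c j = 0
    · obtain ⟨c, hc0, hcJ, hcrow⟩ := hdep
      have hex : ∃ j₀, c j₀ ≠ 0 := by
        by_contra h
        push_neg at h
        exact hc0 (funext fun j => h j)
      obtain ⟨j₀, hj₀⟩ := hex
      have hj₀J : j₀ ∈ J := by
        by_contra h
        exact hj₀ (hcJ j₀ h)
      have hcr : ((c j₀ : ℚ) : ℝ) ≠ 0 := by exact_mod_cast hj₀
      set t : ℝ := x j₀ / ((c j₀ : ℚ) : ℝ) with ht
      set x' : Fin m → ℝ := fun j => x j - t * ((c j : ℚ) : ℝ) with hx'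
      have hx'0 : ∀ j ∉ J.erase j₀, x' j = 0 := by
        intro j hj
        rw [Finset.mem_erase] at hj
        push_neg at hj
        by_cases hjj : j = j₀
        · subst hjj
          simp [hx', ht, div_mul_cancel₀ _ hcr]
        · have hjJ : j ∉ J := hj hjj
          simp [hx', hx0 j hjJ, hcJ j hjJ]
      have hx'row : ∀ i, ∑ j, (C i j : ℝ) * x' j = (d i : ℝ) := by
        intro i
        have hz : ∑ j, (C i j : ℝ) * ((c j : ℚ) : ℝ) = 0 := by
          have h4 := hcrow i
          exact_mod_cast congrArg (fun q : ℚ => (q : ℝ)) h4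
        calc ∑ j, (C i j : ℝ) * x' j
            = ∑ j, ((C i j : ℝ) * x j - t * ((C i j : ℝ) * ((c j : ℚ) : ℝ))) := by
              apply Finset.sum_congr rfl; intro j _; simp [hx']; ring
          _ = (∑ j, (C i j : ℝ) * x j) - t * ∑ j, (C i j : ℝ) * ((c j : ℚ) : ℝ) := by
              rw [Finset.sum_sub_distrib, Finset.mul_sum]
          _ = (d i : ℝ) := by rw [hx i, hz, mul_zero, sub_zero]
      have h1 : 0 < J.card := Finset.card_pos.2 ⟨j₀, hj₀J⟩
      have h2 := Finset.card_erase_of_mem hj₀J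
      exact ih (J.erase j₀) (by omega) x' hx'0 hx'row
    · exact indep_case m k hm hk C d hC hd J hdep x hx0 hx

theorem small_rational_solution_of_linear_system
    (n m k : ℕ) (hn : 0 < n) (hm : 0 < m) (hk : 0 < k)
    (A : Matrix (Fin n) (Fin m) ℤ) (b : Fin n → ℚ)
    (hA : ∀ i j, |A i j| ≤ (k : ℤ)) (hb : ∀ i, |b i| ≤ (k : ℚ))
    (hsol : ∃ x : Fin m → ℝ, ∀ i, ∑ j, (A i j : ℝ) * x j ≤ (b i : ℝ)) :
    ∃ x : Fin m → ℚ, (∀ i, ∑ j, (A i j : ℚ) * x j ≤ b i) ∧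
      ∀ j, |x j| ≤ ((m * k : ℕ) : ℚ) ^ m := by
  classical
  set rowf : (Fin m → ℝ) → Fin n → ℝ := fun x i => ∑ j, (A i j : ℝ) * x j with hrowf
  set S : (Fin m → ℝ) → Prop := fun x => ∀ i, rowf x i ≤ (b i : ℝ) with hS
  set T : (Fin m → ℝ) → Finset (Fin n) :=
    fun x => Finset.univ.filter (fun i => rowf x i = (b i : ℝ)) with hT
  obtain ⟨x₀, hx₀⟩ := hsol
  have hx₀S : S x₀ := hx₀
  set Ns : Set ℕ := {c | ∃ x, S x ∧ (T x).card = c} with hNs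
  have hNe : Ns.Nonempty := ⟨_, x₀, hx₀S, rfl⟩
  have hBdd : BddAbove Ns := ⟨n, by rintro c ⟨x, -, rfl⟩; simpa using (Finset.card_le_univ (T x))⟩
  obtain ⟨z, hzS, hzcard⟩ := Nat.sSup_mem hNe hBdd
  have hmax : ∀ x, S x → (T x).card ≤ (T z).card := by
    intro x hx
    rw [hzcard]
    exact le_csSup hBdd ⟨x, hx, rfl⟩
  have hV : ∀ y : Fin m → ℝ, (∀ i ∈ T z, rowf y i = (b i : ℝ)) → S y := by
    intro y hy
    by_contra hns
    have hex : ∃ i, (b i : ℝ) < rowf y i := by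
      simp only [hS] at hns
      push_neg at hns
      obtain ⟨i, hi⟩ := hns
      exact ⟨i, hi⟩
    set bad : Finset (Fin n) := Finset.univ.filter (fun i => (b i : ℝ) < rowf y i) with hbad
    have hbadne : bad.Nonempty := by
      obtain ⟨i, hi⟩ := hex
      exact ⟨i, by simp [hbad, hi]⟩
    have hbadT : ∀ i ∈ bad, i ∉ T z := by
      intro i hi hiT
      rw [hbad, Finset.mem_filter] at hi
      have h0 := hy i hiT
      linarith [hi.2]
    have hstrict : ∀ i ∈ bad, rowf z i < (b i : ℝ) := by
      intro i hi
      rcases lt_or_eq_of_le (hzS i) with h | h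
      · exact h
      · exact absurd (by simp [hT, h] : i ∈ T z) (hbadT i hi)
    have hiy : ∀ i ∈ bad, rowf z i < rowf y i := by
      intro i hi
      refine lt_trans (hstrict i hi) ?_
      rw [hbad, Finset.mem_filter] at hi
      exact hi.2
    set tf : Fin n → ℝ := fun i => ((b i : ℝ) - rowf z i) / (rowf y i - rowf z i) with htf
    obtain ⟨i', hi'bad, hi'min⟩ := Finset.exists_min_image bad tf hbadne
    have htfpos : ∀ i ∈ bad, 0 < tf i := fun i hi =>
      div_pos (by linarith [hstrict i hi]) (by linarith [hiy i hi])
    have htflt : ∀ i ∈ bad, tf i < 1 := by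
      intro i hi
      have h1 := hiy i hi
      rw [htf]
      rw [div_lt_one (by linarith)]
      rw [hbad, Finset.mem_filter] at hi
      linarith [hi.2]
    have ht0 : 0 < tf i' := htfpos i' hi'bad
    have ht1 : tf i' < 1 := htflt i' hi'bad
    set t : ℝ := tf i' with htd
    set w : Fin m → ℝ := fun j => z j + t * (y j - z j) with hw
    have hroww : ∀ i, rowf w i = rowf z i + t * (rowf y i - rowf z i) := by
      intro i
      simp only [hrowf, hw]
      calc ∑ j, (A i j : ℝ) * (z j + t * (y j - z j))
          = ∑ j, ((A i j : ℝ) * z j + t * ((A i j : ℝ) * y j) - t * ((A i j : ℝ) * z j)) :=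
            Finset.sum_congr rfl (fun j _ => by ring)
        _ = (∑ j, (A i j : ℝ) * z j) + t * (∑ j, (A i j : ℝ) * y j)
              - t * (∑ j, (A i j : ℝ) * z j) := by
            rw [Finset.sum_sub_distrib, Finset.sum_add_distrib, ← Finset.mul_sum,
              ← Finset.mul_sum]
        _ = _ := by ring
    have htight : ∀ i ∈ bad, rowf z i + tf i * (rowf y i - rowf z i) = (b i : ℝ) := by
      intro i hi
      have hne : rowf y i - rowf z i ≠ 0 := by
        have := hiy i hi
        linarith
      simp only [htf]
      field_simp
      ring
    have hSw : S w := by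
      intro i
      rw [hroww i]
      by_cases hi : i ∈ bad
      · have h5 : t ≤ tf i := hi'min i hi
        have h6 : rowf z i < rowf y i := hiy i hi
        have h7 := htight i hi
        nlinarith
      · have h5 : rowf y i ≤ (b i : ℝ) := by
          rw [hbad, Finset.mem_filter] at hi
          push_neg at hi
          exact hi (Finset.mem_univ i)
        have h6 := hzS i
        nlinarith
    have hti' : rowf w i' = (b i' : ℝ) := by
      rw [hroww i', htd]
      exact htight i' hi'bad
    have hsub : insert i' (T z) ⊆ T w := by
      intro i hi
      rw [Finset.mem_insert] at hi
      rw [hT, Finset.mem_filter]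
      refine ⟨Finset.mem_univ _, ?_⟩
      rcases hi with rfl | hi
      · exact hti'
      · have h9 : rowf z i = (b i : ℝ) := by
          rw [hT, Finset.mem_filter] at hi
          exact hi.2
        have h10 := hy i hi
        rw [hroww i, h9, h10]
        ring
    have hcard2 : (T z).card + 1 ≤ (T w).card := by
      have h11 := Finset.card_le_card hsub
      rwa [Finset.card_insert_of_notMem (hbadT i' hi'bad)] at h11
    have h12 := hmax w hSw
    omega
  obtain ⟨y, hy1, hy2⟩ := key_lemma m k hm hk (ι := {i // i ∈ T z})
    (fun i j => A i.1 j) (fun i => b i.1) (fun i j => hA i.1 j) (fun i => hb i.1)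
    m Finset.univ (by simp) z (fun j hj => absurd (Finset.mem_univ j) hj)
    (fun i => by
      have h13 : i.1 ∈ T z := i.2
      exact (Finset.mem_filter.mp h13).2)
  refine ⟨y, ?_, hy2⟩
  have hyS : S (fun j => ((y j : ℚ) : ℝ)) := by
    apply hV
    intro i' hi'
    have h11 := hy1 ⟨i', hi'⟩
    have h12 : ((∑ j, (A i' j : ℚ) * y j : ℚ) : ℝ) = ((b i' : ℚ) : ℝ) := by rw [h11]
    push_cast at h12
    simpa [hrowf] using h12
  intro i
  have h13 := hyS i
  simp only [hrowf] at h13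
  have h14 : ((∑ j, (A i j : ℚ) * y j : ℚ) : ℝ) ≤ ((b i : ℚ) : ℝ) := by
    push_cast
    exact h13
  exact_mod_cast h14
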